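/- arXiv:2406.03302 — 2 statements merged into one kernel-verified Lean document; each statement's English description precedes it below -/
import Mathlib

section
/- Assume (i) consistency for a=0 (A(ω)=0 implies Y⁰(ω)=Y(ω)), (ii) conditional mean exchangeability over A in the trial for a=0 (E[Y⁰|X=x,S=1]=E[Y⁰|X=x,S=1,A=0] whenever P(X=x,S=1)>0), (iii) positivity of treatment 0 in the trial (P(A=0|X=x,S=1)>0 whenever P(X=x,S=1)>0), (iv) mean transportability for a=0 (E[Y⁰|X=x,S=1]=E[Y⁰|X=x,S=0] whenever both P(X=x,S=1)>0 and P(X=x,S=0)>0), and (v) uniform use of treatment 0 in the external data (P(A=0|S=0)=1). Then for every x with P(X=x,S=1)>0 and P(X=x,S=0)>0, E[Y | X=x, S=1, A=0] = E[Y | X=x, S=0, A=0]. -/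
open Finset
open scoped Classical

noncomputable def pr {Ω : Type*} [Fintype Ω] (P : Ω → ℝ) (E : Ω → Prop) : ℝ :=
  ∑ ω, if E ω then P ω else 0

noncomputable def cexp {Ω : Type*} [Fintype Ω] (P : Ω → ℝ) (Y : Ω → ℝ) (E : Ω → Prop) : ℝ :=
  (∑ ω, if E ω then Y ω * P ω else 0) / pr P E

noncomputable def cpr {Ω : Type*} [Fintype Ω] (P : Ω → ℝ) (E F : Ω → Prop) : ℝ :=
  pr P (fun ω => E ω ∧ F ω) / pr P F

lemma pr_congr_zero {Ω : Type*} [Fintype Ω] (P : Ω → ℝ) (E F : Ω → Prop)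
    (h : ∀ ω, P ω ≠ 0 → (E ω ↔ F ω)) : pr P E = pr P F := by
  unfold pr
  apply Finset.sum_congr rfl
  intro ω _
  by_cases hp : P ω = 0
  · simp [hp]
  · simp [h ω hp]

lemma cexp_congr_zero {Ω : Type*} [Fintype Ω] (P : Ω → ℝ) (Y : Ω → ℝ) (E F : Ω → Prop)
    (h : ∀ ω, P ω ≠ 0 → (E ω ↔ F ω)) : cexp P Y E = cexp P Y F := by
  unfold cexp
  rw [pr_congr_zero P E F h]
  congr 1
  apply Finset.sum_congr rfl
  intro ω _
  by_cases hp : P ω = 0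
  · simp [hp]
  · simp [h ω hp]

lemma cexp_congr_Y {Ω : Type*} [Fintype Ω] (P : Ω → ℝ) (Y Z : Ω → ℝ) (E : Ω → Prop)
    (h : ∀ ω, E ω → Y ω = Z ω) : cexp P Y E = cexp P Z E := by
  unfold cexp
  congr 1
  apply Finset.sum_congr rfl
  intro ω _
  by_cases he : E ω
  · simp [he, h ω he]
  · simp [he]

theorem stmt1    {Ω 𝓧 : Type*} [Fintype Ω] [Fintype 𝓧]
    (P : Ω → ℝ) (hP : ∀ ω, 0 ≤ P ω) (hPsum : ∑ ω, P ω = 1)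
    (X : Ω → 𝓧) (S : Ω → ℕ) (A : Ω → ℕ) (Y : Ω → ℝ)
    (Y0 : Ω → ℝ)
    (hS0 : 0 < pr P (fun ω => S ω = 0))
    (hcons : ∀ ω, A ω = 0 → Y0 ω = Y ω)
    (hexch : ∀ x, 0 < pr P (fun ω => X ω = x ∧ S ω = 1) → cexp P Y0 (fun ω => X ω = x ∧ S ω = 1) = cexp P Y0 (fun ω => X ω = x ∧ S ω = 1 ∧ A ω = 0))
    (hpos : ∀ x, 0 < pr P (fun ω => X ω = x ∧ S ω = 1) → 0 < cpr P (fun ω => A ω = 0) (fun ω => X ω = x ∧ S ω = 1))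
    (htrans : ∀ x, 0 < pr P (fun ω => X ω = x ∧ S ω = 1) → 0 < pr P (fun ω => X ω = x ∧ S ω = 0) → cexp P Y0 (fun ω => X ω = x ∧ S ω = 1) = cexp P Y0 (fun ω => X ω = x ∧ S ω = 0))
    (huniform : cpr P (fun ω => A ω = 0) (fun ω => S ω = 0) = 1)
    : ∀ x, 0 < pr P (fun ω => X ω = x ∧ S ω = 1) → 0 < pr P (fun ω => X ω = x ∧ S ω = 0) →
      cexp P Y (fun ω => X ω = x ∧ S ω = 1 ∧ A ω = 0) = cexp P Y (fun ω => X ω = x ∧ S ω = 0 ∧ A ω = 0) := by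
  intro x h1 h0
  -- From huniform: P ω = 0 whenever S ω = 0 ∧ A ω ≠ 0
  have hkey : ∀ ω, S ω = 0 → A ω ≠ 0 → P ω = 0 := by
    have hA0 : pr P (fun ω => A ω = 0 ∧ S ω = 0) = pr P (fun ω => S ω = 0) := by
      have := huniform
      unfold cpr at this
      field_simp at this
      linarith [this]
    have hsplit : pr P (fun ω => S ω = 0) =
        pr P (fun ω => A ω = 0 ∧ S ω = 0) + pr P (fun ω => ¬ (A ω = 0) ∧ S ω = 0) := by
      unfold pr
      rw [← Finset.sum_add_distrib]
      apply Finset.sum_congr rfl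
      intro ω _
      by_cases h : S ω = 0 <;> by_cases h' : A ω = 0 <;> simp [h, h']
    have hz : pr P (fun ω => ¬ (A ω = 0) ∧ S ω = 0) = 0 := by linarith
    unfold pr at hz
    intro ω hs ha
    have hall := (Finset.sum_eq_zero_iff_of_nonneg (fun i _ => by
      by_cases h : ¬ (A i = 0) ∧ S i = 0 <;> simp [h, hP i])).mp hz ω (Finset.mem_univ ω)
    simpa [ha, hs] using hall
  -- LHS chain
  have e1 : cexp P Y (fun ω => X ω = x ∧ S ω = 1 ∧ A ω = 0)
      = cexp P Y0 (fun ω => X ω = x ∧ S ω = 1 ∧ A ω = 0) := by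
    apply cexp_congr_Y
    intro ω ⟨_, _, ha⟩
    exact (hcons ω ha).symm
  have e2 : cexp P Y0 (fun ω => X ω = x ∧ S ω = 0)
      = cexp P Y0 (fun ω => X ω = x ∧ S ω = 0 ∧ A ω = 0) := by
    apply cexp_congr_zero
    intro ω hp
    constructor
    · rintro ⟨hx, hs⟩
      refine ⟨hx, hs, ?_⟩
      by_contra ha
      exact hp (hkey ω hs ha)
    · rintro ⟨hx, hs, _⟩; exact ⟨hx, hs⟩
  have e3 : cexp P Y0 (fun ω => X ω = x ∧ S ω = 0 ∧ A ω = 0)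
      = cexp P Y (fun ω => X ω = x ∧ S ω = 0 ∧ A ω = 0) := by
    apply cexp_congr_Y
    intro ω ⟨_, _, ha⟩
    exact hcons ω ha
  rw [e1, ← hexch x h1, htrans x h1 h0, e2, e3]
end

section
/- Assume (i) consistency for a=2 (A(ω)=2 implies Y²(ω)=Y(ω)), (ii) mean transportability for a=2 (E[Y²|X=x,S=1]=E[Y²|X=x,S=0] whenever P(X=x,S=1)>0 and P(X=x,S=0)>0), (iii) positivity of the external source (P(S=0|X=x)>0 whenever P(X=x,S=1)>0), and (iv) uniform use of treatment 2 in the external data (P(A=2|S=0)=1). Then E[Y² | S=1] = η := Σ_x E[Y | X=x, S=0] · P(X=x | S=1), summing over x with P(X=x,S=1)>0. -/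
open Finset
open scoped Classical

section aux
variable {Ω : Type*} [Fintype Ω] (P : Ω → ℝ)

noncomputable def num' (Y : Ω → ℝ) (E : Ω → Prop) : ℝ :=
  ∑ ω, if E ω then Y ω * P ω else 0

lemma cexp_eq_num (Y : Ω → ℝ) (E : Ω → Prop) : cexp P Y E = num' P Y E / pr P E := rfl

lemma pr_nonneg' (hP : ∀ ω, 0 ≤ P ω) (E : Ω → Prop) : 0 ≤ pr P E := by
  unfold pr
  apply Finset.sum_nonneg
  intro ω _
  split <;> simp [hP ω]

lemma pr_zero' (hP : ∀ ω, 0 ≤ P ω) (E : Ω → Prop) (h : ¬ 0 < pr P E) :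
    ∀ ω, E ω → P ω = 0 := by
  intro ω hω
  have h0 : pr P E = 0 := le_antisymm (not_lt.mp h) (pr_nonneg' P hP E)
  unfold pr at h0
  have := (Finset.sum_eq_zero_iff_of_nonneg (fun ω _ => by split <;> simp [hP ω])).mp h0 ω
    (Finset.mem_univ ω)
  simpa [hω] using this

end aux

theorem stmt4    {Ω 𝓧 : Type*} [Fintype Ω] [Fintype 𝓧]
    (P : Ω → ℝ) (hP : ∀ ω, 0 ≤ P ω) (hPsum : ∑ ω, P ω = 1)
    (X : Ω → 𝓧) (S : Ω → ℕ) (A : Ω → ℕ) (Y : Ω → ℝ)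
    (Y2 : Ω → ℝ)
    (hS1 : 0 < pr P (fun ω => S ω = 1))
    (hS0 : 0 < pr P (fun ω => S ω = 0))
    (hcons : ∀ ω, A ω = 2 → Y2 ω = Y ω)
    (htrans : ∀ x, 0 < pr P (fun ω => X ω = x ∧ S ω = 1) → 0 < pr P (fun ω => X ω = x ∧ S ω = 0) → cexp P Y2 (fun ω => X ω = x ∧ S ω = 1) = cexp P Y2 (fun ω => X ω = x ∧ S ω = 0))
    (hextpos : ∀ x, 0 < pr P (fun ω => X ω = x ∧ S ω = 1) → 0 < cpr P (fun ω => S ω = 0) (fun ω => X ω = x))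
    (huniform : cpr P (fun ω => A ω = 2) (fun ω => S ω = 0) = 1)
    : cexp P Y2 (fun ω => S ω = 1) =
      ∑ x ∈ univ.filter (fun x => 0 < pr P (fun ω => X ω = x ∧ S ω = 1)),
        cexp P Y (fun ω => X ω = x ∧ S ω = 0) * (pr P (fun ω => X ω = x ∧ S ω = 1) / pr P (fun ω => S ω = 1)) := by
  classical
  -- uniform treatment: P ω = 0 whenever S ω = 0 and A ω ≠ 2
  have hnum : pr P (fun ω => A ω = 2 ∧ S ω = 0) = pr P (fun ω => S ω = 0) := by
    have h := huniform
    unfold cpr at h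
    rwa [div_eq_one_iff_eq hS0.ne'] at h
  have hsplit : pr P (fun ω => S ω = 0) =
      pr P (fun ω => A ω = 2 ∧ S ω = 0) + pr P (fun ω => ¬ A ω = 2 ∧ S ω = 0) := by
    unfold pr
    rw [← Finset.sum_add_distrib]
    apply Finset.sum_congr rfl
    intro ω _
    by_cases h1 : S ω = 0 <;> by_cases h2 : A ω = 2 <;> simp [h1, h2]
  have hbad : ¬ 0 < pr P (fun ω => ¬ A ω = 2 ∧ S ω = 0) := by
    rw [not_lt]
    nlinarith [hnum, hsplit]
  have hbad0 := pr_zero' P hP _ hbad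
  have h02 : ∀ ω, S ω = 0 → Y2 ω * P ω = Y ω * P ω := by
    intro ω hω
    by_cases h2 : A ω = 2
    · rw [hcons ω h2]
    · rw [hbad0 ω ⟨h2, hω⟩]; ring
  -- E[Y2|X=x,S=0] = E[Y|X=x,S=0]
  have hYY2 : ∀ x : 𝓧, cexp P Y2 (fun ω => X ω = x ∧ S ω = 0) =
      cexp P Y (fun ω => X ω = x ∧ S ω = 0) := by
    intro x
    rw [cexp_eq_num, cexp_eq_num]
    congr 1
    unfold num'
    apply Finset.sum_congr rfl
    intro ω _
    by_cases h : X ω = x ∧ S ω = 0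
    · simp only [h, if_true]
      exact h02 ω h.2
    · simp [h]
  -- positivity of pr (X = x ∧ S = 0)
  have hpos0 : ∀ x, 0 < pr P (fun ω => X ω = x ∧ S ω = 1) →
      0 < pr P (fun ω => X ω = x ∧ S ω = 0) := by
    intro x hx
    have h := hextpos x hx
    unfold cpr at h
    have hn : 0 < pr P (fun ω => S ω = 0 ∧ X ω = x) := by
      by_contra hc
      rw [not_lt] at hc
      have h0 : pr P (fun ω => S ω = 0 ∧ X ω = x) = 0 :=
        le_antisymm hc (pr_nonneg' P hP _)
      rw [h0, zero_div] at h
      exact lt_irrefl 0 h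
    have heq : pr P (fun ω => S ω = 0 ∧ X ω = x) = pr P (fun ω => X ω = x ∧ S ω = 0) := by
      unfold pr
      apply Finset.sum_congr rfl
      intro ω _
      by_cases h1 : X ω = x <;> by_cases h2 : S ω = 0 <;> simp [h1, h2]
    rwa [heq] at hn
  -- decomposition of numerator
  set F := (univ : Finset 𝓧).filter (fun x => 0 < pr P (fun ω => X ω = x ∧ S ω = 1)) with hF
  have hdecomp : num' P Y2 (fun ω => S ω = 1) =
      ∑ x ∈ F, num' P Y2 (fun ω => X ω = x ∧ S ω = 1) := by
    have h1 : num' P Y2 (fun ω => S ω = 1) =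
        ∑ x : 𝓧, num' P Y2 (fun ω => X ω = x ∧ S ω = 1) := by
      unfold num'
      rw [Finset.sum_comm]
      apply Finset.sum_congr rfl
      intro ω _
      by_cases h : S ω = 1
      · simp [h]
      · simp [h]
    rw [h1]
    symm
    apply Finset.sum_subset (Finset.filter_subset _ _)
    intro x _ hx
    rw [Finset.mem_filter] at hx
    have hz := pr_zero' P hP _ (fun h => hx ⟨Finset.mem_univ x, h⟩)
    unfold num'
    apply Finset.sum_eq_zero
    intro ω _
    by_cases h : X ω = x ∧ S ω = 1
    · simp [h, hz ω h]
    · simp [h]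
  -- conclude
  rw [cexp_eq_num, hdecomp, Finset.sum_div]
  apply Finset.sum_congr rfl
  intro x hx
  rw [Finset.mem_filter] at hx
  have hx1 := hx.2
  have hx0 := hpos0 x hx1
  have key : cexp P Y2 (fun ω => X ω = x ∧ S ω = 1) =
      cexp P Y (fun ω => X ω = x ∧ S ω = 0) := (htrans x hx1 hx0).trans (hYY2 x)
  have hnumeq : num' P Y2 (fun ω => X ω = x ∧ S ω = 1) =
      cexp P Y2 (fun ω => X ω = x ∧ S ω = 1) * pr P (fun ω => X ω = x ∧ S ω = 1) := by
    rw [cexp_eq_num, div_mul_cancel₀ _ hx1.ne']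
  rw [hnumeq, key]
  ring
end
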